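/- arXiv:2011.02817 — 3 statements merged into one kernel-verified Lean document; each statement's English description precedes it below -/
import Mathlib

section
/- If x₁,…,x_n are nonnegative reals with ∑ᵢ xᵢ = L and each xᵢ ≤ 1, then ∑ᵢ i·xᵢ ≥ L²/2. -/
theorem stmt_0 (n : ℕ) (hn : 0 < n) (L : ℝ) (hL : 0 ≤ L) (x : Fin n → ℝ)
    (hx0 : ∀ i, 0 ≤ x i) (hx1 : ∀ i, x i ≤ 1) (hsum : ∑ i, x i = L) :
    ∑ i : Fin n, ((i : ℕ) + 1 : ℝ) * x i ≥ L ^ 2 / 2 := by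
  have hsplit : ∀ i : Fin n, ∑ j, x i * x j
      = ∑ j ∈ Finset.Iic i, x i * x j + ∑ j ∈ Finset.Ioi i, x i * x j := by
    intro i
    rw [← Finset.sum_union]
    · congr 1
      ext j
      simp [le_or_gt]
    · exact Finset.disjoint_left.2 fun j hj hj' =>
        absurd (Finset.mem_Ioi.1 hj') (not_lt.2 (Finset.mem_Iic.1 hj))
  have hswap : ∑ i : Fin n, ∑ j ∈ Finset.Ioi i, x i * x j
      = ∑ i : Fin n, ∑ j ∈ Finset.Iio i, x i * x j := by
    rw [Finset.sum_sigma', Finset.sum_sigma']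
    refine Finset.sum_nbij' (fun p ↦ ⟨p.2, p.1⟩) (fun p ↦ ⟨p.2, p.1⟩) ?_ ?_ ?_ ?_ ?_ <;>
      simp [mul_comm]
  have hIioIic : ∀ i : Fin n, ∑ j ∈ Finset.Iio i, x i * x j
      ≤ ∑ j ∈ Finset.Iic i, x i * x j := by
    intro i
    refine Finset.sum_le_sum_of_subset_of_nonneg ?_ (fun j _ _ => mul_nonneg (hx0 i) (hx0 j))
    exact Finset.Iio_subset_Iic_self
  have key : L ^ 2 ≤ 2 * ∑ i, x i * ∑ j ∈ Finset.Iic i, x j := by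
    have : L ^ 2 = ∑ i : Fin n, ∑ j : Fin n, x i * x j := by
      rw [← hsum, sq, Finset.sum_mul_sum]
    have h2 : ∑ i, x i * ∑ j ∈ Finset.Iic i, x j = ∑ i, ∑ j ∈ Finset.Iic i, x i * x j := by
      simp_rw [Finset.mul_sum]
    rw [this, h2]
    simp_rw [hsplit, Finset.sum_add_distrib, hswap]
    have h1 : ∑ i : Fin n, ∑ j ∈ Finset.Iio i, x i * x j
        ≤ ∑ i : Fin n, ∑ j ∈ Finset.Iic i, x i * x j :=
      Finset.sum_le_sum fun i _ => hIioIic i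
    linarith
  have hbound : ∑ i, x i * ∑ j ∈ Finset.Iic i, x j ≤ ∑ i : Fin n, ((i : ℕ) + 1 : ℝ) * x i := by
    refine Finset.sum_le_sum fun i _ => ?_
    have : ∑ j ∈ Finset.Iic i, x j ≤ ((i : ℕ) + 1 : ℝ) := by
      calc ∑ j ∈ Finset.Iic i, x j ≤ ∑ j ∈ Finset.Iic i, (1 : ℝ) :=
            Finset.sum_le_sum fun j _ => hx1 j
        _ = ((i : ℕ) + 1 : ℝ) := by simp [Fin.card_Iic]
    calc x i * ∑ j ∈ Finset.Iic i, x j ≤ x i * ((i : ℕ) + 1 : ℝ) :=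
          mul_le_mul_of_nonneg_left this (hx0 i)
      _ = ((i : ℕ) + 1 : ℝ) * x i := mul_comm _ _
  linarith
end

section
/- Every doubly stochastic matrix is a convex combination of permutation matrices (Birkhoff–von Neumann theorem). -/
def DoublyStochastic (n : ℕ) (A : Matrix (Fin n) (Fin n) ℝ) : Prop :=
  (∀ i j, 0 ≤ A i j) ∧ (∀ i, ∑ j, A i j = 1) ∧ (∀ j, ∑ i, A i j = 1)

/-- The permutation matrix of `σ`, with `(P_σ)_{ij} = 1` iff `σ j = i`. -/
def permMat (n : ℕ) (σ : Equiv.Perm (Fin n)) : Matrix (Fin n) (Fin n) ℝ :=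
  Matrix.of fun i j => if σ j = i then (1 : ℝ) else 0

lemma permMat_eq (n : ℕ) (σ : Equiv.Perm (Fin n)) :
    permMat n σ = (σ⁻¹).permMatrix ℝ := by
  ext i j
  simp only [permMat, Equiv.Perm.permMatrix, PEquiv.toMatrix, Equiv.toPEquiv_apply,
    Matrix.of_apply, Option.mem_def, Option.some.injEq]
  congr 1
  simp [eq_comm, Equiv.eq_symm_apply, Equiv.Perm.inv_def]

/-- Birkhoff–von Neumann theorem. -/
theorem stmt_13 (n : ℕ) (A : Matrix (Fin n) (Fin n) ℝ) (hA : DoublyStochastic n A) :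
    ∃ (k : ℕ) (w : Fin k → ℝ) (σ : Fin k → Equiv.Perm (Fin n)),
      (∀ i, 0 ≤ w i) ∧ (∑ i, w i = 1) ∧ A = ∑ i, w i • permMat n (σ i) := by
  have hA' : A ∈ doublyStochastic ℝ (Fin n) := by
    rw [mem_doublyStochastic_iff_sum]
    exact ⟨fun i j => hA.1 i j, fun i => hA.2.1 i, fun j => hA.2.2 j⟩
  obtain ⟨w, hw0, hw1, hw2⟩ := exists_eq_sum_perm_of_mem_doublyStochastic hA'
  let e := (Fintype.equivFin (Equiv.Perm (Fin n))).symm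
  refine ⟨Fintype.card (Equiv.Perm (Fin n)), fun i => w (e i), fun i => (e i)⁻¹,
    fun i => hw0 _, ?_, ?_⟩
  · rw [← hw1]; exact Fintype.sum_equiv e _ _ (fun _ => rfl)
  · rw [← hw2]
    refine (Fintype.sum_equiv e _ _ (fun i => ?_)).symm
    rw [permMat_eq]
    simp
end

section
/- Let A be an n×n doubly stochastic matrix and B the matrix obtained by setting B := Q·A for Q > 0 and then, for each row e and each j ≤ ⌊n/2⌋, adding B_{ej} to B_{e,2j}. Then for every row e and all i, k with 2^k·i ≤ n: ∑_{j=1}^{2^k·i} B_{ej} ≥ (k+1)·Q·∑_{j=1}^{i} A_{ej}; and for every i: ∑_{j=1}^{i} ∑_{e=1}^{n} B_{ej} ≤ 2Q·i. -/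
open Classical in
/-- The matrix `B` produced by the doubling transformation:
`B_{ej} = Q·∑_{j',s : (j'+1)·2^s = j+1} A_{ej'}` (positions are 1-based:
column `j : Fin n` has position `j+1`). -/
noncomputable def Bdoub (n : ℕ) (Q : ℝ) (A : Matrix (Fin n) (Fin n) ℝ) (e j : Fin n) : ℝ :=
  Q * ∑ j' ∈ Finset.univ.filter
      (fun j' : Fin n => ∃ s ∈ Finset.range (n + 1), ((j' : ℕ) + 1) * 2 ^ s = (j : ℕ) + 1),
    A e j'

lemma geo : ∀ i m : ℕ, ∑ s ∈ Finset.range m, i / 2 ^ s ≤ 2 * i := by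
  intro i
  induction i using Nat.strong_induction_on with
  | _ i ih =>
    intro m
    cases m with
    | zero => simp
    | succ t =>
      rcases Nat.eq_zero_or_pos i with hi | hi
      · simp [hi]
      rw [Finset.sum_range_succ']
      have h1 : ∑ s ∈ Finset.range t, i / 2 ^ (s + 1)
          = ∑ s ∈ Finset.range t, (i / 2) / 2 ^ s := by
        refine Finset.sum_congr rfl fun s _ => ?_
        rw [pow_succ', ← Nat.div_div_eq_div_mul]
      have h2 := ih (i / 2) (Nat.div_lt_self hi one_lt_two) t
      simp only [pow_zero, Nat.div_one]
      omega

open Classical in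
lemma card_lb (n i k : ℕ) (hik : 2 ^ k * i ≤ n) (j' : Fin n) (hj' : (j' : ℕ) < i) :
    k + 1 ≤ (Finset.univ.filter (fun j : Fin n => (j : ℕ) < 2 ^ k * i ∧
      ∃ s ∈ Finset.range (n + 1), ((j' : ℕ) + 1) * 2 ^ s = (j : ℕ) + 1)).card := by
  have hn : 0 < n := j'.pos
  have hi : 0 < i := Nat.pos_of_ne_zero (by rintro rfl; omega)
  have hkn : k ≤ n := by
    have h1 : k < 2 ^ k := Nat.lt_two_pow_self
    have h2 : 2 ^ k ≤ 2 ^ k * i := Nat.le_mul_of_pos_right _ hi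
    omega
  have key : ∀ s, s ≤ k → ((j' : ℕ) + 1) * 2 ^ s ≤ 2 ^ k * i := by
    intro s hs
    calc ((j' : ℕ) + 1) * 2 ^ s ≤ i * 2 ^ k :=
      Nat.mul_le_mul hj' (Nat.pow_le_pow_right (by norm_num) hs)
    _ = 2 ^ k * i := Nat.mul_comm _ _
  refine le_trans (le_of_eq (Finset.card_range (k+1)).symm)
    (Finset.card_le_card_of_injOn
      (fun s : ℕ => (⟨(((j' : ℕ) + 1) * 2 ^ s - 1) % n, Nat.mod_lt _ hn⟩ : Fin n)) ?_ ?_)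
  · intro s hs
    simp only [Finset.mem_coe, Finset.mem_range] at hs
    have hle := key s (by omega)
    have hp : 0 < ((j' : ℕ) + 1) * 2 ^ s := Nat.mul_pos (by omega) (Nat.pow_pos (by norm_num))
    have hlt : ((j' : ℕ) + 1) * 2 ^ s - 1 < n := by omega
    have hmod : (((j' : ℕ) + 1) * 2 ^ s - 1) % n = ((j' : ℕ) + 1) * 2 ^ s - 1 :=
      Nat.mod_eq_of_lt hlt
    simp only [Finset.mem_coe, Finset.mem_filter, Finset.mem_univ, true_and, hmod]
    refine ⟨by omega, s, Finset.mem_range.mpr (by omega), by omega⟩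
  · intro a ha b hb hab
    simp only [Finset.mem_coe, Finset.mem_range] at ha hb
    have hpa : 0 < ((j' : ℕ) + 1) * 2 ^ a := Nat.mul_pos (by omega) (Nat.pow_pos (by norm_num))
    have hpb : 0 < ((j' : ℕ) + 1) * 2 ^ b := Nat.mul_pos (by omega) (Nat.pow_pos (by norm_num))
    have hla : ((j' : ℕ) + 1) * 2 ^ a - 1 < n := by have := key a (by omega); omega
    have hlb : ((j' : ℕ) + 1) * 2 ^ b - 1 < n := by have := key b (by omega); omega
    have := congrArg Fin.val hab
    simp only [Nat.mod_eq_of_lt hla, Nat.mod_eq_of_lt hlb] at this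
    have h2 : ((j' : ℕ) + 1) * 2 ^ a = ((j' : ℕ) + 1) * 2 ^ b := by omega
    have h3 : (2:ℕ) ^ a = 2 ^ b := Nat.eq_of_mul_eq_mul_left (by omega) h2
    exact Nat.pow_right_injective (le_refl 2) h3


theorem stmt_17 (n : ℕ) (Q : ℝ) (hQ : 0 < Q) (A : Matrix (Fin n) (Fin n) ℝ)
    (hA : DoublyStochastic n A) :
    (∀ (e : Fin n) (i k : ℕ), 2 ^ k * i ≤ n →
      ∑ j ∈ Finset.univ.filter (fun j : Fin n => (j : ℕ) < 2 ^ k * i), Bdoub n Q A e j ≥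
        (k + 1 : ℝ) * Q * ∑ j ∈ Finset.univ.filter (fun j : Fin n => (j : ℕ) < i), A e j) ∧
    (∀ i : ℕ, i ≤ n →
      ∑ j ∈ Finset.univ.filter (fun j : Fin n => (j : ℕ) < i), ∑ e : Fin n, Bdoub n Q A e j ≤
        2 * Q * i) := by
  classical
  obtain ⟨hpos, hrow, hcol⟩ := hA
  constructor
  · intro e i k hik
    have hmain :
        ∑ j ∈ Finset.univ.filter (fun j : Fin n => (j : ℕ) < 2 ^ k * i), Bdoub n Q A e j
        = Q * ∑ j' : Fin n,
            ((Finset.univ.filter (fun j : Fin n => (j : ℕ) < 2 ^ k * i ∧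
               ∃ s ∈ Finset.range (n + 1), ((j' : ℕ) + 1) * 2 ^ s = (j : ℕ) + 1)).card : ℝ)
              * A e j' := by
      unfold Bdoub
      rw [← Finset.mul_sum]
      congr 1
      rw [Finset.sum_comm'
        (s' := fun j' : Fin n => Finset.univ.filter (fun j : Fin n => (j : ℕ) < 2 ^ k * i ∧
          ∃ s ∈ Finset.range (n + 1), ((j' : ℕ) + 1) * 2 ^ s = (j : ℕ) + 1))
        (t' := Finset.univ) ?_]
      · refine Finset.sum_congr rfl fun j' _ => ?_
        rw [Finset.sum_const, nsmul_eq_mul]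
      · intro j j'
        simp only [Finset.mem_filter, Finset.mem_univ, true_and, and_true]
    rw [hmain, ge_iff_le]
    have h1 : ((k : ℝ) + 1) * Q * ∑ j ∈ Finset.univ.filter (fun j : Fin n => (j : ℕ) < i), A e j
        = Q * (((k : ℝ) + 1) * ∑ j ∈ Finset.univ.filter (fun j : Fin n => (j : ℕ) < i), A e j) := by
      ring
    rw [h1]
    refine mul_le_mul_of_nonneg_left ?_ hQ.le
    have h2 : ((k : ℝ) + 1) * ∑ j ∈ Finset.univ.filter (fun j : Fin n => (j : ℕ) < i), A e j
        ≤ ∑ j' ∈ Finset.univ.filter (fun j' : Fin n => (j' : ℕ) < i),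
            ((Finset.univ.filter (fun j : Fin n => (j : ℕ) < 2 ^ k * i ∧
               ∃ s ∈ Finset.range (n + 1), ((j' : ℕ) + 1) * 2 ^ s = (j : ℕ) + 1)).card : ℝ)
              * A e j' := by
      rw [Finset.mul_sum]
      refine Finset.sum_le_sum fun j' hj' => ?_
      simp only [Finset.mem_filter, Finset.mem_univ, true_and] at hj'
      have hc := card_lb n i k hik j' hj'
      have hc' : ((k : ℝ) + 1) ≤
          ((Finset.univ.filter (fun j : Fin n => (j : ℕ) < 2 ^ k * i ∧
            ∃ s ∈ Finset.range (n + 1), ((j' : ℕ) + 1) * 2 ^ s = (j : ℕ) + 1)).card : ℝ) := by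
        exact_mod_cast hc
      exact mul_le_mul_of_nonneg_right hc' (hpos e j')
    refine h2.trans (Finset.sum_le_sum_of_subset_of_nonneg (Finset.filter_subset _ _) ?_)
    intro j' _ _
    exact mul_nonneg (Nat.cast_nonneg _) (hpos e j')
  · intro i hi
    have hsum_e : ∀ j : Fin n, ∑ e, Bdoub n Q A e j
        = Q * ((Finset.univ.filter (fun j' : Fin n => ∃ s ∈ Finset.range (n + 1),
            ((j' : ℕ) + 1) * 2 ^ s = (j : ℕ) + 1)).card : ℝ) := by
      intro j
      unfold Bdoub
      rw [← Finset.mul_sum]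
      congr 1
      rw [Finset.sum_comm (f := fun (e : Fin n) (j' : Fin n) => A e j')]
      rw [Finset.sum_congr rfl (fun j' _ => hcol j'), Finset.sum_const, nsmul_eq_mul, mul_one]
    rw [Finset.sum_congr rfl (fun j _ => hsum_e j), ← Finset.mul_sum]
    have hcard : ∑ j ∈ Finset.univ.filter (fun j : Fin n => (j : ℕ) < i),
        (Finset.univ.filter (fun j' : Fin n => ∃ s ∈ Finset.range (n + 1),
            ((j' : ℕ) + 1) * 2 ^ s = (j : ℕ) + 1)).card ≤ 2 * i := by
      rw [← Finset.card_sigma]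
      have hinj := Finset.card_le_card_of_injOn
        (s := (Finset.univ.filter (fun j : Fin n => (j : ℕ) < i)).sigma
            (fun j => Finset.univ.filter (fun j' : Fin n => ∃ s ∈ Finset.range (n + 1),
              ((j' : ℕ) + 1) * 2 ^ s = (j : ℕ) + 1)))
        (t := (Finset.range (n + 1)).sigma (fun s => Finset.range (i / 2 ^ s)))
        (fun p => ⟨Nat.log 2 (((p.1 : ℕ) + 1) / ((p.2 : ℕ) + 1)), (p.2 : ℕ)⟩) ?_ ?_
      · refine hinj.trans ?_
        rw [Finset.card_sigma]
        calc ∑ s ∈ Finset.range (n + 1), (Finset.range (i / 2 ^ s)).card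
            = ∑ s ∈ Finset.range (n + 1), i / 2 ^ s := by
              simp
          _ ≤ 2 * i := geo i (n + 1)
      · rintro ⟨j, j'⟩ hp
        simp only [Finset.mem_coe, Finset.mem_sigma, Finset.mem_filter, Finset.mem_univ, true_and] at hp
        obtain ⟨hji, s, hs, heq⟩ := hp
        simp only [Finset.mem_range] at hs
        have hdiv : ((j : ℕ) + 1) / ((j' : ℕ) + 1) = 2 ^ s := by
          rw [← heq, Nat.mul_div_cancel_left _ (by omega)]
        simp only [Finset.mem_coe, Finset.mem_sigma, Finset.mem_range]
        constructor
        · rw [hdiv, Nat.log_pow (by norm_num)]; omega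
        · rw [hdiv, Nat.log_pow (by norm_num)]
          have hle : ((j' : ℕ) + 1) * 2 ^ s ≤ i := by omega
          have := (Nat.le_div_iff_mul_le (Nat.pow_pos (n := s) (by norm_num))).mpr hle
          omega
      · rintro ⟨j, j'⟩ hp ⟨l, l'⟩ hl hfeq
        simp only [Finset.mem_coe, Finset.mem_sigma, Finset.mem_filter, Finset.mem_univ,
          true_and] at hp hl
        obtain ⟨hji, s, hs, heq⟩ := hp
        obtain ⟨hli, t, ht, heq'⟩ := hl
        have hdiv : ((j : ℕ) + 1) / ((j' : ℕ) + 1) = 2 ^ s := by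
          rw [← heq, Nat.mul_div_cancel_left _ (by omega)]
        have hdiv' : ((l : ℕ) + 1) / ((l' : ℕ) + 1) = 2 ^ t := by
          rw [← heq', Nat.mul_div_cancel_left _ (by omega)]
        have h1 := congrArg Sigma.fst hfeq
        have h2 := congrArg Sigma.snd hfeq
        simp only at h1 h2
        rw [hdiv, hdiv', Nat.log_pow (by norm_num), Nat.log_pow (by norm_num)] at h1
        have hj'l' : j' = l' := Fin.ext h2
        subst hj'l'
        have hst : (2:ℕ) ^ s = 2 ^ t := by rw [h1]
        rw [hst] at heq
        have hjl : j = l := Fin.ext (by omega)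
        subst hjl
        rfl
    calc Q * ∑ j ∈ Finset.univ.filter (fun j : Fin n => (j : ℕ) < i),
          ((Finset.univ.filter (fun j' : Fin n => ∃ s ∈ Finset.range (n + 1),
            ((j' : ℕ) + 1) * 2 ^ s = (j : ℕ) + 1)).card : ℝ)
        ≤ Q * (2 * i : ℕ) := by
          refine mul_le_mul_of_nonneg_left ?_ hQ.le
          rw [← Nat.cast_sum]
          exact_mod_cast hcard
      _ = 2 * Q * i := by push_cast; ring
end
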